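/- Let A = ℤ⟨X,Y⟩. Then for all a, b ∈ A, the element a²b² − b²a² lies in H := A₄⁰ + F⁵A + 2A. (In particular, H is a two-sided ideal of A and the images of all squares commute in A/H.) -/

import Mathlib

/-- Words in the two letters `X, Y`. -/
abbrev FW := FreeMonoid (Fin 2)

/-- `A = ℤ⟨X,Y⟩`. -/
abbrev A2 := MonoidAlgebra ℤ FW

/-- The word `XYXY`. -/
def wXYXY : FW := FreeMonoid.of 0 * FreeMonoid.of 1 * FreeMonoid.of 0 * FreeMonoid.of 1

/-- The word `YXYX`. -/
def wYXYX : FW := FreeMonoid.of 1 * FreeMonoid.of 0 * FreeMonoid.of 1 * FreeMonoid.of 0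

/-- Generators of `A₄⁰`: all words of length `4` except `XYXY` and `YXYX`. -/
def A40set : Set A2 :=
  {x | ∃ w : FW, w.length = 4 ∧ w ≠ wXYXY ∧ w ≠ wYXYX ∧ x = MonoidAlgebra.of ℤ FW w}

/-- The words of length `≥ n`; they generate `FⁿA = ⊕_{i≥n} A_i` as an additive group. -/
def FdegSet (n : ℕ) : Set A2 :=
  {x | ∃ w : FW, n ≤ w.length ∧ x = MonoidAlgebra.of ℤ FW w}

/-- The set `2A`. -/
def twoA : Set A2 := {x | ∃ a : A2, x = 2 * a}

/-- `H := A₄⁰ + F⁵A + 2A`, as the additive subgroup generated by the union. -/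
noncomputable def Hsub : AddSubgroup A2 := AddSubgroup.closure (A40set ∪ FdegSet 5 ∪ twoA)

instance : DecidableEq FW := fun x y =>
  decidable_of_iff (x.toList = y.toList) FreeMonoid.toList.apply_eq_iff_eq

noncomputable def Xg : A2 := MonoidAlgebra.of ℤ FW (FreeMonoid.of 0)
noncomputable def Yg : A2 := MonoidAlgebra.of ℤ FW (FreeMonoid.of 1)
noncomputable def W (i j k l : Fin 2) : A2 :=
  MonoidAlgebra.of ℤ FW (FreeMonoid.of i * (FreeMonoid.of j * (FreeMonoid.of k * FreeMonoid.of l)))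

lemma two_mem (x : A2) : 2 * x ∈ Hsub :=
  AddSubgroup.subset_closure (Or.inr ⟨x, rfl⟩)

lemma of_deg5_mem (w : FW) (h : 5 ≤ w.length) : MonoidAlgebra.of ℤ FW w ∈ Hsub :=
  AddSubgroup.subset_closure (Or.inl (Or.inr ⟨w, h, rfl⟩))

lemma of_A40_mem (w : FW) (h : w.length = 4) (h1 : w ≠ wXYXY) (h2 : w ≠ wYXYX) :
    MonoidAlgebra.of ℤ FW w ∈ Hsub :=
  AddSubgroup.subset_closure (Or.inl (Or.inl ⟨w, h, h1, h2, rfl⟩))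

lemma smul_A40_mem (k : ℤ) (i j k' l : Fin 2) (h : (FreeMonoid.of i * (FreeMonoid.of j *
      (FreeMonoid.of k' * FreeMonoid.of l)) : FW).length = 4)
    (h1 : (FreeMonoid.of i * (FreeMonoid.of j * (FreeMonoid.of k' * FreeMonoid.of l)) : FW) ≠ wXYXY)
    (h2 : (FreeMonoid.of i * (FreeMonoid.of j * (FreeMonoid.of k' * FreeMonoid.of l)) : FW) ≠ wYXYX) :
    k • W i j k' l ∈ Hsub :=
  AddSubgroup.zsmul_mem _ (of_A40_mem _ h h1 h2) k

lemma mem_of_support (x : A2) (h : ∀ w ∈ x.coeff.support, MonoidAlgebra.of ℤ FW w ∈ Hsub) :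
    x ∈ Hsub := by
  rw [← MonoidAlgebra.sum_coeff_single x]
  refine AddSubgroup.sum_mem _ (fun w hw => ?_)
  have hs : MonoidAlgebra.single w (x.coeff w) = (x.coeff w) • MonoidAlgebra.of ℤ FW w := by
    rw [MonoidAlgebra.of_apply, MonoidAlgebra.smul_single, smul_eq_mul, mul_one]
  rw [hs]
  exact AddSubgroup.zsmul_mem _ (h w hw) _

def degGe (k : ℕ) (x : A2) : Prop := ∀ w ∈ x.coeff.support, k ≤ w.length

lemma degGe.mem (x : A2) (h : degGe 5 x) : x ∈ Hsub :=
  mem_of_support x (fun w hw => of_deg5_mem w (h w hw))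

lemma degGe.mul {j k i : ℕ} {x y : A2} (hx : degGe j x) (hy : degGe k y) (h : i ≤ j + k) :
    degGe i (x * y) := by
  intro w hw
  obtain ⟨w1, h1, w2, h2, rfl⟩ := Finset.mem_mul.1 (MonoidAlgebra.support_coeff_mul_subset x y hw)
  rw [FreeMonoid.length_mul]
  exact le_trans h (add_le_add (hx w1 h1) (hy w2 h2))

lemma degGe.add {k : ℕ} {x y : A2} (hx : degGe k x) (hy : degGe k y) : degGe k (x + y) := by
  intro w hw
  rcases Finset.mem_union.1 (Finsupp.support_add hw) with h | h
  exacts [hx w h, hy w h]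

lemma degGe.neg {k : ℕ} {x : A2} (hx : degGe k x) : degGe k (-x) := by
  intro w hw
  rw [MonoidAlgebra.coeff_neg, Finsupp.support_neg] at hw
  exact hx w hw

lemma degGe.sub {k : ℕ} {x y : A2} (hx : degGe k x) (hy : degGe k y) : degGe k (x - y) := by
  rw [sub_eq_add_neg]; exact hx.add hy.neg

lemma degGe.mono {j k : ℕ} {x : A2} (h : j ≤ k) (hx : degGe k x) : degGe j x :=
  fun w hw => le_trans h (hx w hw)

lemma degGe_smul_of (k : ℕ) (c : ℤ) (w : FW) (h : k ≤ w.length) :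
    degGe k (c • MonoidAlgebra.of ℤ FW w) := by
  intro w' hw'
  rw [MonoidAlgebra.coeff_smul, MonoidAlgebra.of_apply, MonoidAlgebra.coeff_single] at hw'
  have hmem := Finsupp.support_single_subset (Finsupp.support_smul hw')
  rw [Finset.mem_singleton] at hmem
  subst hmem; exact h

lemma stepA (c d : ℤ) (u v : A2) :
    (c • 1 + u) ^ 2 * (d • 1 + v) ^ 2 - (d • 1 + v) ^ 2 * (c • 1 + u) ^ 2 =
    (u ^ 2 * v ^ 2 - v ^ 2 * u ^ 2)
    + 2 * ((2 * c * d) • (u * v - v * u) + c • (u * (v * v) - v * (v * u))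
        + d • (u * (u * v) - v * (u * u))) := by
  have h2 : (2 : A2) = (2 : ℤ) • 1 := by simp
  simp only [h2, pow_two, mul_add, add_mul, mul_sub, sub_mul, smul_mul_assoc, mul_smul_comm,
    smul_smul, one_mul, mul_one, smul_add, smul_sub, mul_assoc]
  module

lemma stepB (p q s t : A2) :
    (p + s) ^ 2 * (q + t) ^ 2 - (q + t) ^ 2 * (p + s) ^ 2 =
    (p ^ 2 * q ^ 2 - q ^ 2 * p ^ 2)
    + ((p ^ 2 * (q * t + t * q + t * t) - (q * t + t * q + t * t) * p ^ 2)
       + ((p * s + s * p + s * s) * q ^ 2 - q ^ 2 * (p * s + s * p + s * s))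
       + ((p * s + s * p + s * s) * (q * t + t * q + t * t)
          - (q * t + t * q + t * t) * (p * s + s * p + s * s))) := by
  noncomm_ring

lemma keyT (m n m' n' : ℤ) :
    (m • Xg + n • Yg) ^ 2 * (m' • Xg + n' • Yg) ^ 2
      - (m' • Xg + n' • Yg) ^ 2 * (m • Xg + n • Yg) ^ 2 =
    (m * m' * (m * n' - n * m')) • W 0 0 0 1
      + (m * m' * (m * n' - n * m')) • W 0 0 1 0
      + (-(m * m' * (m * n' - n * m'))) • W 0 1 0 0
      + (-(m * m' * (m * n' - n * m'))) • W 1 0 0 0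
      + ((m * n' - n * m') * (m * n' + n * m')) • W 0 0 1 1
      + (-((m * n' - n * m') * (m * n' + n * m'))) • W 1 1 0 0
      + (n * n' * (m * n' - n * m')) • W 0 1 1 1
      + (n * n' * (m * n' - n * m')) • W 1 0 1 1
      + (-(n * n' * (m * n' - n * m'))) • W 1 1 0 1
      + (-(n * n' * (m * n' - n * m'))) • W 1 1 1 0 := by
  simp only [Xg, Yg, W, pow_two, mul_add, add_mul, smul_mul_assoc, mul_smul_comm, smul_smul,
    ← map_mul, mul_assoc]
  module

lemma cSub (x y : A2) (w : FW) : (x - y).coeff w = x.coeff w - y.coeff w := Finsupp.sub_apply x.coeff y.coeff w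
lemma cAdd (x y : A2) (w : FW) : (x + y).coeff w = x.coeff w + y.coeff w := Finsupp.add_apply x.coeff y.coeff w

lemma short_words (w : FW) (h : w.length ≤ 1) :
    w = 1 ∨ w = FreeMonoid.of 0 ∨ w = FreeMonoid.of 1 := by
  rcases w with _ | ⟨i, _ | ⟨j, l⟩⟩
  · exact Or.inl rfl
  · fin_cases i
    · exact Or.inr (Or.inl rfl)
    · exact Or.inr (Or.inr rfl)
  · change (i :: j :: l).length ≤ 1 at h
    simp at h

lemma decomp (a : A2) : ∃ (c m n : ℤ) (s : A2), degGe 2 s ∧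
    a = c • 1 + ((m • Xg + n • Yg) + s) := by
  refine ⟨a.coeff 1, a.coeff (FreeMonoid.of 0), a.coeff (FreeMonoid.of 1),
    a - (a.coeff 1) • 1 - ((a.coeff (FreeMonoid.of 0)) • Xg + (a.coeff (FreeMonoid.of 1)) • Yg), ?_, by module⟩
  intro w hw
  by_contra hlen
  push_neg at hlen
  have hsw : w = 1 ∨ w = FreeMonoid.of 0 ∨ w = FreeMonoid.of 1 := short_words w (by omega)
  apply Finsupp.mem_support_iff.1 hw
  have e1 : (FreeMonoid.of 0 : FW) ≠ 1 := by decide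
  have e2 : (FreeMonoid.of 1 : FW) ≠ 1 := by decide
  have e3 : (FreeMonoid.of 0 : FW) ≠ FreeMonoid.of 1 := by decide
  rcases hsw with rfl | rfl | rfl <;>
    simp [Xg, Yg, MonoidAlgebra.one_def, MonoidAlgebra.of_apply, Finsupp.single_apply,
      cSub, cAdd, Finsupp.smul_apply, MonoidAlgebra.coeff_single, MonoidAlgebra.coeff_smul, e1, e2, e3, e1.symm, e2.symm, e3.symm]

/-- for all `a, b ∈ ℤ⟨X,Y⟩`, the element `a²b² − b²a²` lies in
`H = A₄⁰ + F⁵A + 2A`. -/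
theorem stmt11 (a b : A2) : a ^ 2 * b ^ 2 - b ^ 2 * a ^ 2 ∈ Hsub := by
  obtain ⟨c, m, n, s, hs, ha⟩ := decomp a
  obtain ⟨d, m', n', t, ht, hb⟩ := decomp b
  rw [ha, hb, stepA, stepB, keyT]
  refine add_mem (add_mem ?_ ?_) (two_mem _)
  · repeat' apply add_mem
    all_goals exact AddSubgroup.zsmul_mem _ (of_A40_mem _ (by decide) (by decide) (by decide)) _
  · have hp : degGe 1 (m • Xg + n • Yg) :=
      (degGe_smul_of 1 m _ (by decide)).add (degGe_smul_of 1 n _ (by decide))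
    have hq : degGe 1 (m' • Xg + n' • Yg) :=
      (degGe_smul_of 1 m' _ (by decide)).add (degGe_smul_of 1 n' _ (by decide))
    have hp2 : degGe 2 ((m • Xg + n • Yg) ^ 2) := by
      rw [pow_two]; exact hp.mul hp (by norm_num)
    have hq2 : degGe 2 ((m' • Xg + n' • Yg) ^ 2) := by
      rw [pow_two]; exact hq.mul hq (by norm_num)
    have hr : degGe 3 ((m • Xg + n • Yg) * s + s * (m • Xg + n • Yg) + s * s) :=
      ((hp.mul hs (by norm_num)).add (hs.mul hp (by norm_num))).add (hs.mul hs (by norm_num))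
    have hr' : degGe 3 ((m' • Xg + n' • Yg) * t + t * (m' • Xg + n' • Yg) + t * t) :=
      ((hq.mul ht (by norm_num)).add (ht.mul hq (by norm_num))).add (ht.mul ht (by norm_num))
    refine add_mem (add_mem ?_ ?_) ?_
    · exact degGe.mem _ ((hp2.mul hr' (by norm_num)).sub (hr'.mul hp2 (by norm_num)))
    · exact degGe.mem _ ((hr.mul hq2 (by norm_num)).sub (hq2.mul hr (by norm_num)))
    · exact degGe.mem _ ((hr.mul hr' (by norm_num)).sub (hr'.mul hr (by norm_num)))
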